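/- Let f : ℝ → ℝ be continuous on [s⁺, s⁻] (with s⁺ < s⁻ or s⁻ < s⁺), and set v = (f(s⁻) − f(s⁺))/(s⁻ − s⁺), Ψ(s) = f(s) − f(s⁻) − v(s − s⁻). If f is S-shaped (as above) then Ψ cannot vanish at an interior point of the interval between s⁺ and s⁻ without changing sign; hence Oleinik's condition Ψ(s)(s⁺ − s⁻) ≥ 0 for all s strictly between s⁺ and s⁻ is equivalent to the strict condition Ψ(s)(s⁺ − s⁻) > 0 there. -/

import Mathlib

open Set

private lemma combo_aux {p m q : ℝ} (h1 : p < m) (h2 : m < q) :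
    ∃ a b : ℝ, 0 < a ∧ 0 < b ∧ a + b = 1 ∧ a * p + b * q = m := by
  have hqp : q - p ≠ 0 := by linarith
  refine ⟨(q - m) / (q - p), (m - p) / (q - p), div_pos (by linarith) (by linarith),
    div_pos (by linarith) (by linarith), ?_, ?_⟩
  · rw [← add_div, div_eq_one_iff_eq hqp]; ring
  · rw [div_mul_eq_mul_div, div_mul_eq_mul_div, ← add_div,
      div_eq_iff hqp]; ring

private lemma scvx_mid {D : Set ℝ} {Ψ : ℝ → ℝ} (h : StrictConvexOn ℝ D Ψ)
    {p q x : ℝ} (hp : p ∈ D) (hq : q ∈ D) (hΨp : Ψ p = 0) (hΨq : Ψ q = 0)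
    (h1 : p < x) (h2 : x < q) : Ψ x < 0 := by
  obtain ⟨a, b, ha, hb, hab, hx⟩ := combo_aux h1 h2
  have := h.2 hp hq (ne_of_lt (h1.trans h2)) ha hb hab
  simp only [smul_eq_mul, hΨp, hΨq, mul_zero, add_zero, zero_add] at this
  rw [hx] at this
  linarith

private lemma scvx_right {D : Set ℝ} {Ψ : ℝ → ℝ} (h : StrictConvexOn ℝ D Ψ)
    {p q x : ℝ} (hp : p ∈ D) (hx : x ∈ D) (hΨp : Ψ p = 0) (hΨq : Ψ q = 0)
    (h1 : p < q) (h2 : q < x) : 0 < Ψ x := by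
  obtain ⟨a, b, ha, hb, hab, hq⟩ := combo_aux h1 h2
  have := h.2 hp hx (ne_of_lt (h1.trans h2)) ha hb hab
  simp only [smul_eq_mul, hΨp, mul_zero, zero_add] at this
  rw [hq, hΨq] at this
  by_contra hc
  push_neg at hc
  nlinarith [mul_nonpos_of_nonneg_of_nonpos hb.le hc]

private lemma scvx_left {D : Set ℝ} {Ψ : ℝ → ℝ} (h : StrictConvexOn ℝ D Ψ)
    {p q x : ℝ} (hx : x ∈ D) (hq : q ∈ D) (hΨp : Ψ p = 0) (hΨq : Ψ q = 0)
    (h1 : x < p) (h2 : p < q) : 0 < Ψ x := by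
  obtain ⟨a, b, ha, hb, hab, hp⟩ := combo_aux h1 h2
  have := h.2 hx hq (ne_of_lt (h1.trans h2)) ha hb hab
  simp only [smul_eq_mul, hΨq, mul_zero, add_zero] at this
  rw [hp, hΨp] at this
  by_contra hc
  push_neg at hc
  nlinarith [mul_nonpos_of_nonneg_of_nonpos ha.le hc]

/-- For an S-shaped flux, Ψ cannot vanish at an interior point of the interval between
s⁺ and s⁻ without changing sign; hence the nonstrict and strict Oleinik conditions
are equivalent. -/
theorem stmt8 (f : ℝ → ℝ) (sI sp sm : ℝ)
    (hf : ContDiff ℝ 2 f) (hf0 : f 0 = 0) (hf1 : f 1 = 1)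
    (hf' : ∀ x ∈ Ioo (0:ℝ) 1, 0 < deriv f x)
    (hf'0 : deriv f 0 = 0) (hf'1 : deriv f 1 = 0)
    (hsI : sI ∈ Ioo (0:ℝ) 1)
    (hconv : ∀ x ∈ Ioo (0:ℝ) sI, 0 < deriv (deriv f) x)
    (hconc : ∀ x ∈ Ioo sI 1, deriv (deriv f) x < 0)
    (hsp : sp ∈ Icc (0:ℝ) 1) (hsm : sm ∈ Icc (0:ℝ) 1) (hne : sp ≠ sm) :
    letI v : ℝ := (f sm - f sp) / (sm - sp)
    letI Ψ : ℝ → ℝ := fun s => f s - f sm - v * (s - sm)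
    (∀ s₀ ∈ uIoo sp sm, Ψ s₀ = 0 → ∀ ε > 0, ∃ a ∈ uIoo sp sm, ∃ b ∈ uIoo sp sm,
        |a - s₀| < ε ∧ |b - s₀| < ε ∧ Ψ a * Ψ b < 0) ∧
    ((∀ s ∈ uIoo sp sm, 0 ≤ Ψ s * (sp - sm)) ↔
      (∀ s ∈ uIoo sp sm, 0 < Ψ s * (sp - sm))) := by
  set v : ℝ := (f sm - f sp) / (sm - sp) with hv
  set Ψ : ℝ → ℝ := fun s => f s - f sm - v * (s - sm) with hΨdef
  have hd1 : Differentiable ℝ f := hf.differentiable two_ne_zero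
  have hΨder : ∀ x : ℝ, HasDerivAt Ψ (deriv f x - v) x := by
    intro x
    have h1 : HasDerivAt f (deriv f x) x := (hd1 x).hasDerivAt
    have h2 : HasDerivAt (fun s : ℝ => v * (s - sm)) v x := by
      simpa using (((hasDerivAt_id x).sub_const sm).const_mul v)
    exact (h1.sub_const (f sm)).sub h2
  have hΨd : deriv Ψ = fun x => deriv f x - v := funext fun x => (hΨder x).deriv
  have hΨ2 : ∀ x : ℝ, deriv (deriv Ψ) x = deriv (deriv f) x := by
    intro x
    rw [hΨd, deriv_sub_const]
  have hΨc : Continuous Ψ :=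
    (hd1.continuous.sub continuous_const).sub
      (continuous_const.mul (continuous_id.sub continuous_const))
  have hcvx : StrictConvexOn ℝ (Icc 0 sI) Ψ := by
    apply strictConvexOn_of_deriv2_pos (convex_Icc _ _) hΨc.continuousOn
    intro x hx
    rw [interior_Icc] at hx
    show 0 < deriv (deriv Ψ) x
    rw [hΨ2]
    exact hconv x hx
  have hccx : StrictConvexOn ℝ (Icc sI 1) (-Ψ) := by
    have hccv : StrictConcaveOn ℝ (Icc sI 1) Ψ := by
      apply strictConcaveOn_of_deriv2_neg (convex_Icc _ _) hΨc.continuousOn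
      intro x hx
      rw [interior_Icc] at hx
      show deriv (deriv Ψ) x < 0
      rw [hΨ2]
      exact hconc x hx
    exact hccv.neg
  have hspm : sm - sp ≠ 0 := sub_ne_zero.mpr (Ne.symm hne)
  have hΨsm : Ψ sm = 0 := by show f sm - f sm - v * (sm - sm) = 0; ring
  have hΨsp : Ψ sp = 0 := by
    show f sp - f sm - v * (sp - sm) = 0
    rw [hv]
    field_simp
    ring
  have hΨα : Ψ (min sp sm) = 0 := by
    rcases le_total sp sm with h | h
    · rw [min_eq_left h]; exact hΨsp
    · rw [min_eq_right h]; exact hΨsm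
  have hΨβ : Ψ (max sp sm) = 0 := by
    rcases le_total sp sm with h | h
    · rw [max_eq_right h]; exact hΨsm
    · rw [max_eq_left h]; exact hΨsp
  have hα0 : (0:ℝ) ≤ min sp sm := le_min hsp.1 hsm.1
  have hβ1 : max sp sm ≤ 1 := max_le hsp.2 hsm.2
  have huIoo : uIoo sp sm = Ioo (min sp sm) (max sp sm) := rfl
  have hnΨ : ∀ y : ℝ, (-Ψ) y = -(Ψ y) := fun y => rfl
  have key : ∀ s₀ ∈ uIoo sp sm, Ψ s₀ = 0 → ∀ ε > 0, ∃ a ∈ uIoo sp sm, ∃ b ∈ uIoo sp sm,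
      |a - s₀| < ε ∧ |b - s₀| < ε ∧ Ψ a * Ψ b < 0 := by
    intro s₀ hs₀ hΨ0 ε hε
    rw [huIoo] at hs₀
    obtain ⟨h1, h2⟩ := hs₀
    have hs₀0 : 0 < s₀ := lt_of_le_of_lt hα0 h1
    have hs₀1 : s₀ < 1 := lt_of_lt_of_le h2 hβ1
    -- left point: Ψ a < 0
    obtain ⟨a, haI, haε, hΨa⟩ : ∃ a, a ∈ Ioo (min sp sm) s₀ ∧ s₀ - ε < a ∧ Ψ a < 0 := by
      rcases le_or_gt s₀ sI with hcase | hcase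
      · -- convex region: zeros at min and s₀
        set m := max (min sp sm) (s₀ - ε) with hm
        have hm1 : m < s₀ := max_lt h1 (by linarith)
        have hma : min sp sm ≤ m := le_max_left _ _
        have hmb : s₀ - ε ≤ m := le_max_right _ _
        refine ⟨(m + s₀) / 2, ⟨by linarith, by linarith⟩, by linarith, ?_⟩
        exact scvx_mid hcvx ⟨hα0, by linarith⟩ ⟨hs₀0.le, hcase⟩ hΨα hΨ0
          (by linarith) (by linarith)
      · -- concave region: zeros at s₀ and max
        set m := max (max (min sp sm) sI) (s₀ - ε) with hm
        have hm1 : m < s₀ := max_lt (max_lt h1 hcase) (by linarith)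
        have hma : min sp sm ≤ m := le_trans (le_max_left _ _) (le_max_left _ _)
        have hmi : sI ≤ m := le_trans (le_max_right _ _) (le_max_left _ _)
        have hmb : s₀ - ε ≤ m := le_max_right _ _
        refine ⟨(m + s₀) / 2, ⟨by linarith, by linarith⟩, by linarith, ?_⟩
        have := scvx_left hccx (x := (m + s₀) / 2) (p := s₀) (q := max sp sm)
          ⟨by linarith, by linarith⟩ ⟨by linarith, hβ1⟩
          (by rw [hnΨ, hΨ0, neg_zero]) (by rw [hnΨ, hΨβ, neg_zero])
          (by linarith) h2
        rw [hnΨ] at this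
        linarith
    -- right point: 0 < Ψ b
    obtain ⟨b, hbI, hbε, hΨb⟩ : ∃ b, b ∈ Ioo s₀ (max sp sm) ∧ b < s₀ + ε ∧ 0 < Ψ b := by
      rcases lt_or_ge s₀ sI with hcase | hcase
      · -- convex region: zeros at min and s₀, point to the right
        set m := min (min sI (max sp sm)) (s₀ + ε) with hm
        have hm1 : s₀ < m := lt_min (lt_min hcase h2) (by linarith)
        have hma : m ≤ sI := le_trans (min_le_left _ _) (min_le_left _ _)
        have hmb : m ≤ max sp sm := le_trans (min_le_left _ _) (min_le_right _ _)
        have hmc : m ≤ s₀ + ε := min_le_right _ _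
        refine ⟨(s₀ + m) / 2, ⟨by linarith, by linarith⟩, by linarith, ?_⟩
        exact scvx_right hcvx (x := (s₀ + m) / 2) (p := min sp sm) (q := s₀)
          ⟨hα0, by linarith⟩ ⟨by linarith, by linarith⟩ hΨα hΨ0 h1 (by linarith)
      · -- concave region: zeros at s₀ and max
        set m := min (max sp sm) (s₀ + ε) with hm
        have hm1 : s₀ < m := lt_min h2 (by linarith)
        have hma : m ≤ max sp sm := min_le_left _ _
        have hmc : m ≤ s₀ + ε := min_le_right _ _
        refine ⟨(s₀ + m) / 2, ⟨by linarith, by linarith⟩, by linarith, ?_⟩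
        have := scvx_mid hccx (x := (s₀ + m) / 2) (p := s₀) (q := max sp sm)
          ⟨hcase, hs₀1.le⟩ ⟨by linarith, hβ1⟩
          (by rw [hnΨ, hΨ0, neg_zero]) (by rw [hnΨ, hΨβ, neg_zero])
          (by linarith) (by linarith)
        rw [hnΨ] at this
        linarith
    refine ⟨a, ?_, b, ?_, ?_, ?_, mul_neg_of_neg_of_pos hΨa hΨb⟩
    · rw [huIoo]; exact ⟨haI.1, haI.2.trans h2⟩
    · rw [huIoo]; exact ⟨h1.trans hbI.1, hbI.2⟩
    · rw [abs_lt]; constructor <;> linarith [haI.2]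
    · rw [abs_lt]; constructor <;> linarith [hbI.1]
  refine ⟨key, ?_, fun h s hs => (h s hs).le⟩
  intro h s hs
  rcases (h s hs).lt_or_eq with hlt | heq
  · exact hlt
  · exfalso
    have hΨs : Ψ s = 0 := by
      rcases mul_eq_zero.mp heq.symm with h0 | h0
      · exact h0
      · exact absurd (sub_eq_zero.mp h0) hne
    obtain ⟨a, ha, b, hb, _, _, hab⟩ := key s hs hΨs 1 one_pos
    have h1 := h a ha
    have h2 := h b hb
    have hsq : 0 < (sp - sm) ^ 2 := by
      rcases (sub_ne_zero.mpr hne).lt_or_gt with hl | hl <;> nlinarith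
    have h3 : Ψ a * Ψ b * (sp - sm) ^ 2 < 0 := mul_neg_of_neg_of_pos hab hsq
    nlinarith [mul_nonneg h1 h2]
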